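/- Let m ≥ 1 and let A be a real skew-symmetric m×m matrix. Then the Frobenius (Hilbert–Schmidt) norm of A² satisfies ‖A²‖_F ≤ (1/√2)·‖A‖_F². -/

import Mathlib

open Matrix

/-- The Frobenius (Hilbert–Schmidt) norm of a real square matrix:
`‖M‖_F = √(trace(Mᵀ M))`. -/
noncomputable def frobNorm {m : ℕ} (M : Matrix (Fin m) (Fin m) ℝ) : ℝ :=
  Real.sqrt (Matrix.trace (Mᵀ * M))

/-- If `A` is a real skew-symmetric `m × m` matrix (`m ≥ 1`), then
`‖A²‖_F ≤ (1/√2) ‖A‖_F²`. -/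
theorem frobNorm_sq_le_of_skew {m : ℕ} (hm : 1 ≤ m)
    (A : Matrix (Fin m) (Fin m) ℝ) (hA : Aᵀ = -A) :
    frobNorm (A * A) ≤ (1 / Real.sqrt 2) * frobNorm A ^ 2 := by
  classical
  have hconj : Aᴴ = Aᵀ := Matrix.conjTranspose_eq_transpose_of_trivial A
  set B : Matrix (Fin m) (Fin m) ℝ := Aᵀ * A with hBdef
  have hBH : B.IsHermitian := by
    rw [hBdef, ← hconj]; exact Matrix.isHermitian_conjTranspose_mul_self A
  have hBpsd : B.PosSemidef := by
    rw [hBdef, ← hconj]; exact Matrix.posSemidef_conjTranspose_mul_self A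
  set ev : Fin m → ℝ := hBH.eigenvalues with hev
  have hev_nonneg : ∀ i, 0 ≤ ev i := hBpsd.eigenvalues_nonneg
  set U : Matrix (Fin m) (Fin m) ℝ := (hBH.eigenvectorUnitary : Matrix (Fin m) (Fin m) ℝ) with hU
  have hUU : star U * U = 1 := (Matrix.mem_unitaryGroup_iff').mp (hBH.eigenvectorUnitary).2
  -- trace identities
  have htr : B.trace = ∑ i, ev i := by
    conv_lhs => rw [hBH.spectral_theorem, Unitary.conjStarAlgAut_apply]
    rw [Matrix.trace_mul_cycle, ← hU, hUU, Matrix.one_mul]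
    simp [Matrix.trace_diagonal, hev]
  have htr2 : (B * B).trace = ∑ i, ev i ^ 2 := by
    conv_lhs => rw [hBH.spectral_theorem, Unitary.conjStarAlgAut_apply]
    simp only [Matrix.mul_assoc, ← hU]
    rw [← Matrix.mul_assoc (star U), hUU, Matrix.one_mul, Matrix.trace_mul_comm]
    simp only [Matrix.mul_assoc]
    rw [hUU, Matrix.mul_one, Matrix.diagonal_mul_diagonal]
    simp [Matrix.trace_diagonal, pow_two, hev]
  -- symmetry of B on dot products
  have hBT : Bᵀ = B := by rw [hBdef, Matrix.transpose_mul, Matrix.transpose_transpose]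
  have hsym : ∀ x y : Fin m → ℝ, (B *ᵥ x) ⬝ᵥ y = x ⬝ᵥ (B *ᵥ y) := by
    intro x y
    rw [Matrix.dotProduct_mulVec, ← Matrix.mulVec_transpose, hBT, dotProduct_comm,
      Matrix.dotProduct_mulVec, ← Matrix.mulVec_transpose, hBT, dotProduct_comm]
  have hinner : ∀ x y : EuclideanSpace ℝ (Fin m), inner (𝕜 := ℝ) x y = ⇑x ⬝ᵥ ⇑y := by
    intro x y; simp [PiLp.inner_apply, dotProduct, mul_comm]
  set b := hBH.eigenvectorBasis with hb
  have hortho := orthonormal_iff_ite.mp b.orthonormal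
  -- key multiplicity claim
  have key : ∀ i, 0 < ev i → ∃ j, j ≠ i ∧ ev j = ev i := by
    intro i hi
    set v : Fin m → ℝ := ⇑(b i) with hv
    set w : Fin m → ℝ := A *ᵥ v with hw
    have hBv : B *ᵥ v = ev i • v := hBH.mulVec_eigenvectorBasis i
    have hcomm : B * A = A * B := by
      rw [hBdef, hA]; simp [Matrix.mul_assoc]
    have hBw : B *ᵥ w = ev i • w := by
      rw [hw, Matrix.mulVec_mulVec, hcomm, ← Matrix.mulVec_mulVec, hBv, Matrix.mulVec_smul]
    have hvv : v ⬝ᵥ v = 1 := by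
      have h1 : inner (𝕜 := ℝ) (b i) (b i) = 1 := by simpa using hortho i i
      have h2 := hinner (b i) (b i)
      rw [h1] at h2
      exact h2.symm
    have hvw : v ⬝ᵥ w = 0 := by
      have h1 : v ⬝ᵥ w = -(v ⬝ᵥ w) := by
        conv_lhs => rw [hw, Matrix.dotProduct_mulVec, ← Matrix.mulVec_transpose, hA]
        rw [Matrix.neg_mulVec, neg_dotProduct, dotProduct_comm, ← hw]
      linarith
    have hww : w ⬝ᵥ w = ev i := by
      conv_lhs => rw [hw, Matrix.dotProduct_mulVec, ← Matrix.mulVec_transpose,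
        Matrix.mulVec_mulVec, ← hBdef, hBv]
      rw [smul_dotProduct, hvv, smul_eq_mul, mul_one]
    by_contra hcon
    push_neg at hcon
    have hcoef : ∀ j, ⇑(b j) ⬝ᵥ w = 0 := by
      intro j
      by_cases hj : j = i
      · subst hj; exact hvw
      · have h1 : ev j * (⇑(b j) ⬝ᵥ w) = ev i * (⇑(b j) ⬝ᵥ w) := by
          have h2 := hsym (⇑(b j)) w
          rw [hBH.mulVec_eigenvectorBasis j, hBw] at h2
          simpa [smul_dotProduct, dotProduct_smul, smul_eq_mul, hev, hb] using h2
        have h3 : (ev j - ev i) * (⇑(b j) ⬝ᵥ w) = 0 := by ring_nf; linarith [h1]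
        rcases mul_eq_zero.mp h3 with h4 | h4
        · exact absurd (by linarith : ev j = ev i) (hcon j hj)
        · exact h4
    have hWzero : (WithLp.equiv 2 (Fin m → ℝ)).symm w = 0 := by
      have hrepr : b.repr ((WithLp.equiv 2 (Fin m → ℝ)).symm w) = 0 := by
        ext j
        rw [b.repr_apply_apply]
        have := hinner (b j) ((WithLp.equiv 2 (Fin m → ℝ)).symm w)
        rw [this]
        simpa using hcoef j
      exact (LinearIsometryEquiv.map_eq_zero_iff _).mp hrepr
    have hw0 : w = 0 := congrArg (WithLp.equiv 2 (Fin m → ℝ)) hWzero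
    rw [hw0] at hww
    simp at hww
    exact absurd hww.symm (ne_of_gt hi)
  -- scalar part
  set T := B.trace with hT
  have hTsum : T = ∑ i, ev i := htr
  have hTnn : 0 ≤ T := by
    rw [hTsum]; exact Finset.sum_nonneg fun i _ => hev_nonneg i
  have hT2 : ∀ i, 2 * ev i ≤ T := by
    intro i
    rcases (hev_nonneg i).lt_or_eq with h | h
    · obtain ⟨j, hji, hje⟩ := key i h
      have hsub : ev i + ev j ≤ ∑ k, ev k := by
        have h5 := Finset.sum_le_sum_of_subset_of_nonneg
          (Finset.subset_univ ({i, j} : Finset (Fin m))) (fun k _ _ => hev_nonneg k)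
        rwa [Finset.sum_pair (Ne.symm hji)] at h5
      rw [hTsum]; linarith [hje]
    · rw [hTsum, ← h]
      simpa using Finset.sum_nonneg fun k (_ : k ∈ Finset.univ) => hev_nonneg k
  have hsum2 : ∑ i, ev i ^ 2 ≤ T ^ 2 / 2 := by
    calc ∑ i, ev i ^ 2 ≤ ∑ i, T / 2 * ev i :=
          Finset.sum_le_sum fun i _ => by nlinarith [hT2 i, hev_nonneg i]
      _ = T / 2 * ∑ i, ev i := by rw [Finset.mul_sum]
      _ = T ^ 2 / 2 := by rw [← hTsum]; ring
  have hfa : frobNorm A ^ 2 = T := by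
    rw [frobNorm, Real.sq_sqrt hTnn]
  have heq : (A * A)ᵀ * (A * A) = B * B := by
    rw [Matrix.transpose_mul, hA, hBdef, hA]
    simp [Matrix.mul_assoc]
  rw [frobNorm, heq, hfa]
  calc Real.sqrt ((B * B).trace) = Real.sqrt (∑ i, ev i ^ 2) := by rw [htr2]
    _ ≤ Real.sqrt (T ^ 2 / 2) := Real.sqrt_le_sqrt hsum2
    _ = 1 / Real.sqrt 2 * T := by
        have h7 : T ^ 2 / 2 = (1 / Real.sqrt 2 * T) ^ 2 := by
          rw [mul_pow, div_pow, one_pow, Real.sq_sqrt (by norm_num : (0:ℝ) ≤ 2)]; ring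
        rw [h7, Real.sqrt_sq (mul_nonneg (by positivity) hTnn)]
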